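/- arXiv:1804.07615 — 4 statements merged into one kernel-verified Lean document; each statement's English description precedes it below -/
import Mathlib

section
/- Let q be a pure unit quaternion and L = spanℝ{1, q} ⊆ ℍ. For any two unit quaternions a, b, the left translates a·L and b·L are either equal or intersect only in {0}. Moreover, the family {a·L : a a unit quaternion} covers all of ℍ. -/
open Quaternion

/-- For a pure unit quaternion `q` and `L = spanℝ{1, q}`, the left translates `a·L`, for `a`
ranging over the unit quaternions, are pairwise either equal or meeting only in `{0}`, and they
cover ℍ: the left Clifford parallel class of `L` is a spread of ℝ⁴ = ℍ. -/
theorem left_clifford_translates_spread (q : Quaternion ℝ)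
    (hpure : q.re = 0) (hunit : ‖q‖ = 1) :
    (∀ a b : Quaternion ℝ, ‖a‖ = 1 → ‖b‖ = 1 →
      (fun x => a * x) '' (Submodule.span ℝ {(1 : Quaternion ℝ), q} : Set (Quaternion ℝ)) =
        (fun x => b * x) '' (Submodule.span ℝ {(1 : Quaternion ℝ), q} : Set (Quaternion ℝ)) ∨
      (fun x => a * x) '' (Submodule.span ℝ {(1 : Quaternion ℝ), q} : Set (Quaternion ℝ)) ∩
        (fun x => b * x) '' (Submodule.span ℝ {(1 : Quaternion ℝ), q} : Set (Quaternion ℝ)) = {0}) ∧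
    (⋃ a ∈ {a : Quaternion ℝ | ‖a‖ = 1},
      (fun x => a * x) '' (Submodule.span ℝ {(1 : Quaternion ℝ), q} : Set (Quaternion ℝ))) = Set.univ := by
  set S : Submodule ℝ (Quaternion ℝ) := Submodule.span ℝ {(1 : Quaternion ℝ), q} with hS
  have hnormSq : Quaternion.normSq q = 1 := by
    rw [Quaternion.normSq_eq_norm_mul_self, hunit]; ring
  have hstarq : star q = -q := by
    ext <;> simp [hpure]
  have hq2 : q * q = -1 := by
    have h1 : q * star q = ((Quaternion.normSq q : ℝ) : Quaternion ℝ) := q.self_mul_star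
    rw [hstarq, mul_neg, hnormSq] at h1
    simpa using congrArg Neg.neg h1
  have hmul : ∀ u ∈ S, ∀ v ∈ S, u * v ∈ S := by
    intro u hu v hv
    rw [hS, Submodule.mem_span_pair] at hu hv ⊢
    obtain ⟨r, s, rfl⟩ := hu
    obtain ⟨r', s', rfl⟩ := hv
    refine ⟨r * r' - s * s', r * s' + s * r', ?_⟩
    simp only [add_mul, mul_add, smul_mul_assoc, mul_smul_comm, hq2, one_mul, mul_one,
      smul_smul, smul_neg, sub_smul, add_smul]
    module
  have hstarS : ∀ u ∈ S, star u ∈ S := by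
    intro u hu
    rw [hS, Submodule.mem_span_pair] at hu ⊢
    obtain ⟨r, s, rfl⟩ := hu
    exact ⟨r, -s, by simp [hstarq, neg_smul, smul_neg]⟩
  have hinv : ∀ u ∈ S, u⁻¹ ∈ S := by
    intro u hu
    rw [Quaternion.inv_def]
    exact S.smul_mem _ (hstarS u hu)
  constructor
  · intro a b ha hb
    by_cases hx : ∃ x, x ≠ 0 ∧ x ∈ (fun x => a * x) '' (S : Set (Quaternion ℝ)) ∩
        (fun x => b * x) '' (S : Set (Quaternion ℝ))
    · left
      obtain ⟨x, hx0, ⟨u, hu, hau⟩, ⟨v, hv, hbv⟩⟩ := hx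
      have hb0 : b ≠ 0 := by intro h; simp [h] at hb
      have ha0 : a ≠ 0 := by intro h; simp [h] at ha
      have hu0 : u ≠ 0 := by rintro rfl; simp at hau; exact hx0 hau.symm
      have hv0 : v ≠ 0 := by rintro rfl; simp at hbv; exact hx0 hbv.symm
      have heq : a * u = b * v := hau.trans hbv.symm
      have hab : a = b * (v * u⁻¹) := by
        rw [← mul_assoc, ← heq, mul_assoc, mul_inv_cancel₀ hu0, mul_one]
      have hab' : b = a * (u * v⁻¹) := by
        rw [← mul_assoc, heq, mul_assoc, mul_inv_cancel₀ hv0, mul_one]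
      have hc : v * u⁻¹ ∈ S := hmul v hv _ (hinv u hu)
      have hc' : u * v⁻¹ ∈ S := hmul u hu _ (hinv v hv)
      apply Set.Subset.antisymm
      · rintro y ⟨w, hw, rfl⟩
        exact ⟨v * u⁻¹ * w, hmul _ hc w hw, by show b * (v * u⁻¹ * w) = a * w; simp [hab, mul_assoc]⟩
      · rintro y ⟨w, hw, rfl⟩
        exact ⟨u * v⁻¹ * w, hmul _ hc' w hw, by show a * (u * v⁻¹ * w) = b * w; simp [hab', mul_assoc]⟩
    · right
      push_neg at hx
      apply Set.Subset.antisymm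
      · intro y hy
        by_contra h0
        exact hx y (by simpa using h0) hy
      · rintro y (rfl : y = 0)
        exact ⟨⟨0, S.zero_mem, mul_zero a⟩, ⟨0, S.zero_mem, mul_zero b⟩⟩
  · apply Set.eq_univ_of_forall
    intro y
    by_cases hy : y = 0
    · subst hy
      refine Set.mem_biUnion (show (1 : Quaternion ℝ) ∈ {a : Quaternion ℝ | ‖a‖ = 1} by simp) ?_
      exact ⟨0, S.zero_mem, mul_zero 1⟩
    · have hny : ‖y‖ ≠ 0 := norm_ne_zero_iff.mpr hy
      refine Set.mem_biUnion (show (‖y‖⁻¹ • y) ∈ {a : Quaternion ℝ | ‖a‖ = 1} by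
        simp [norm_smul, abs_of_nonneg, inv_mul_cancel₀ hny]) ?_
      refine ⟨‖y‖ • 1, S.smul_mem _ (Submodule.subset_span (by simp)), ?_⟩
      simp [mul_smul_comm, smul_smul, mul_inv_cancel₀ hny]
end

section
/- Let q be a pure unit quaternion, L = spanℝ{1, q} ⊆ ℍ, and let a, b be unit quaternions such that a·L = L·b as real subspaces of ℍ. Then either a·L = L, or a·L = L^⊥ (the orthogonal complement of L with respect to the standard inner product on ℍ). -/
open Quaternion
open scoped RealInnerProductSpace

section Helpers

lemma qre_mul_comm (x y : ℍ) : (x*y).re = (y*x).re := by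
  simp [Quaternion.re_mul]; ring

lemma qstar_mul_self_one {l : ℍ} (hl : ‖l‖ = 1) : star l * l = 1 := by
  have := Quaternion.star_mul_self l
  rw [Quaternion.normSq_eq_norm_mul_self, hl] at this
  simpa using this

lemma qself_mul_star_one {l : ℍ} (hl : ‖l‖ = 1) : l * star l = 1 := by
  have := Quaternion.self_mul_star l
  rw [Quaternion.normSq_eq_norm_mul_self, hl] at this
  simpa using this

lemma qpure_sq {q : ℍ} (hpure : q.re = 0) (hunit : ‖q‖ = 1) : q * q = -1 := by
  have hs : star q = -q := Quaternion.star_eq_neg.2 hpure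
  have h := qstar_mul_self_one hunit
  rw [hs, neg_mul] at h
  rw [← h, neg_neg]

lemma qmul_pair {q : ℍ} (hq : q*q = -1) (u v u' v' : ℝ) :
    ((u:ℝ)•(1:ℍ) + v•q) * (u'•(1:ℍ) + v'•q)
      = (u*u'-v*v')•(1:ℍ) + (u*v'+v*u')•q := by
  simp only [add_mul, mul_add, smul_mul_assoc, mul_smul_comm, one_mul, mul_one, hq]
  module

lemma qstar_pair {q : ℍ} (hq : q.re = 0) (u v : ℝ) :
    star ((u:ℝ)•(1:ℍ) + v•q) = u•(1:ℍ) + (-v)•q := by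
  have : star q = -q := Quaternion.star_eq_neg.2 hq
  simp [this]

lemma qnorm_pair {q : ℍ} (hpure : q.re = 0) (hq2 : q*q = -1) (r lam : ℝ) :
    normSq (r•(1:ℍ) + lam•q) = r^2 + lam^2 := by
  rw [Quaternion.normSq_def, qstar_pair hpure, qmul_pair hq2]
  simp [hpure]
  ring

lemma qmap_left (a q : ℍ) :
    (Submodule.span ℝ {(1 : ℍ), q}).map (LinearMap.mulLeft ℝ a) =
      Submodule.span ℝ {a, a*q} := by
  rw [Submodule.map_span]; congr 1; simp [Set.image_insert_eq]

lemma qmap_right (b q : ℍ) :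
    (Submodule.span ℝ {(1 : ℍ), q}).map (LinearMap.mulRight ℝ b) =
      Submodule.span ℝ {b, q*b} := by
  rw [Submodule.map_span]; congr 1; simp [Set.image_insert_eq]

lemma qcomm_decomp {q b : ℍ} (hpure : q.re = 0)
    (hqn' : q.imI^2 + q.imJ^2 + q.imK^2 = 1) (hcomm : b*q = q*b) :
    b = b.re•(1:ℍ) + (b.imI*q.imI + b.imJ*q.imJ + b.imK*q.imK)•q := by
  have e1 := congrArg QuaternionAlgebra.imI hcomm
  have e2 := congrArg QuaternionAlgebra.imJ hcomm
  have e3 := congrArg QuaternionAlgebra.imK hcomm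
  simp only [Quaternion.imI_mul, Quaternion.imJ_mul, Quaternion.imK_mul, hpure,
    zero_mul, mul_zero, add_zero, zero_add] at e1 e2 e3
  have c1 : b.imJ*q.imK - b.imK*q.imJ = 0 := by linarith
  have c2 : b.imK*q.imI - b.imI*q.imK = 0 := by linarith
  have c3 : b.imI*q.imJ - b.imJ*q.imI = 0 := by linarith
  ext
  · simp [hpure]
  · simp [hpure]
    linear_combination (-b.imI)*hqn' + q.imJ*c3 - q.imK*c2
  · simp [hpure]
    linear_combination (-b.imJ)*hqn' + q.imK*c1 - q.imI*c3
  · simp [hpure]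
    linear_combination (-b.imK)*hqn' + q.imI*c2 - q.imJ*c1

lemma qanti_decomp {q b : ℍ} (hpure : q.re = 0)
    (hqn' : q.imI^2 + q.imJ^2 + q.imK^2 = 1) (hanti : b*q = -(q*b)) :
    b.re = 0 ∧ q.imI*b.imI + q.imJ*b.imJ + q.imK*b.imK = 0 := by
  have e0 := congrArg QuaternionAlgebra.re hanti
  have e1 := congrArg QuaternionAlgebra.imI hanti
  have e2 := congrArg QuaternionAlgebra.imJ hanti
  have e3 := congrArg QuaternionAlgebra.imK hanti
  simp only [Quaternion.re_neg, Quaternion.imI_neg, Quaternion.imJ_neg, Quaternion.imK_neg,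
    Quaternion.re_mul, Quaternion.imI_mul, Quaternion.imJ_mul, Quaternion.imK_mul, hpure,
    zero_mul, mul_zero, add_zero, zero_add, zero_sub] at e0 e1 e2 e3
  have cI : b.re * q.imI = 0 := by linarith
  have cJ : b.re * q.imJ = 0 := by linarith
  have cK : b.re * q.imK = 0 := by linarith
  constructor
  · linear_combination (-b.re)*hqn' + q.imI*cI + q.imJ*cJ + q.imK*cK
  · linarith

/-- In the commuting case, `span{b, q*b} = span{1, q}`. -/
lemma qspan_comm_case {q b : ℍ} (hpure : q.re = 0) (hunit : ‖q‖ = 1) (hb : ‖b‖ = 1)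
    (hcomm : b*q = q*b) :
    Submodule.span ℝ {b, q*b} = Submodule.span ℝ {(1:ℍ), q} := by
  have hq2 : q*q = -1 := qpure_sq hpure hunit
  have hqn1 : normSq q = 1 := by
    rw [Quaternion.normSq_eq_norm_mul_self, hunit]; norm_num
  have hqn' : q.imI^2 + q.imJ^2 + q.imK^2 = 1 := by
    have h := Quaternion.normSq_def' q
    rw [hqn1, hpure] at h
    linear_combination -h
  obtain ⟨r, hr⟩ : ∃ r : ℝ, r = b.re := ⟨_, rfl⟩
  obtain ⟨lam, hlam⟩ : ∃ lam : ℝ, lam = b.imI*q.imI + b.imJ*q.imJ + b.imK*q.imK := ⟨_, rfl⟩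
  have hbeq : b = r•(1:ℍ) + lam•q := by
    rw [hr, hlam]; exact qcomm_decomp hpure hqn' hcomm
  have hqb : q * b = (-lam)•(1:ℍ) + r•q := by
    rw [hbeq, mul_add, mul_smul_comm, mul_smul_comm, mul_one, hq2]
    module
  have hrlam : r^2 + lam^2 = 1 := by
    have h := qnorm_pair hpure hq2 r lam
    rw [← hbeq, Quaternion.normSq_eq_norm_mul_self, hb] at h
    linear_combination -h
  apply le_antisymm
  · rw [Submodule.span_le]
    rintro z hz
    simp only [Set.mem_insert_iff, Set.mem_singleton_iff] at hz
    rcases hz with rfl | rfl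
    · exact Submodule.mem_span_pair.2 ⟨r, lam, hbeq.symm⟩
    · exact Submodule.mem_span_pair.2 ⟨-lam, r, hqb.symm⟩
  · rw [Submodule.span_le]
    rintro z hz
    simp only [Set.mem_insert_iff, Set.mem_singleton_iff] at hz
    rcases hz with rfl | rfl
    · refine Submodule.mem_span_pair.2 ⟨r, -lam, ?_⟩
      rw [hqb, hbeq]
      match_scalars
      · linear_combination hrlam
      · ring
    · refine Submodule.mem_span_pair.2 ⟨lam, r, ?_⟩
      rw [hqb, hbeq]
      match_scalars
      · ring
      · linear_combination hrlam

lemma qmem_orth (q x : ℍ) (h1 : ⟪(1:ℍ), x⟫ = 0) (h2 : ⟪q, x⟫ = 0) :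
    x ∈ (Submodule.span ℝ {(1:ℍ), q})ᗮ := by
  rw [Submodule.mem_orthogonal]
  intro u hu
  obtain ⟨s, t, rfl⟩ := Submodule.mem_span_pair.1 hu
  rw [inner_add_left, real_inner_smul_left, real_inner_smul_left, h1, h2]
  ring

lemma qfinrank_pair {b c : ℍ} (h1 : ‖b‖ = 1) (h2 : ‖c‖ = 1) (h3 : ⟪b, c⟫ = 0) :
    Module.finrank ℝ (Submodule.span ℝ {b, c}) = 2 := by
  have horth : Orthonormal ℝ ![b, c] := by
    constructor
    · intro i; fin_cases i <;> simpa
    · intro i j hij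
      fin_cases i <;> fin_cases j <;> simp_all [real_inner_comm b c]
  have hset : ({b, c} : Set ℍ) = Set.range ![b, c] := by
    simp [Matrix.range_cons, Matrix.range_empty]
    ext x; simp [or_comm]
  rw [hset, finrank_span_eq_card horth.linearIndependent]
  simp

/-- In the anticommuting case, `span{b, q*b} = (span{1, q})ᗮ`. -/
lemma qspan_anti_case {q b : ℍ} (hpure : q.re = 0) (hunit : ‖q‖ = 1) (hb : ‖b‖ = 1)
    (hanti : b*q = -(q*b)) :
    Submodule.span ℝ {b, q*b} = (Submodule.span ℝ {(1:ℍ), q})ᗮ := by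
  have hbb : b * star b = 1 := qself_mul_star_one hb
  have hqn1 : normSq q = 1 := by
    rw [Quaternion.normSq_eq_norm_mul_self, hunit]; norm_num
  have hqn' : q.imI^2 + q.imJ^2 + q.imK^2 = 1 := by
    have h := Quaternion.normSq_def' q
    rw [hqn1, hpure] at h
    linear_combination -h
  obtain ⟨hbre, hdot⟩ := qanti_decomp hpure hqn' hanti
  have hqcoe : ((normSq q : ℝ) : ℍ) = 1 := by rw [hqn1]; norm_num
  have i1b : ⟪(1:ℍ), b⟫ = 0 := by
    rw [Quaternion.inner_def, one_mul, Quaternion.re_star, hbre]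
  have iqb : ⟪q, b⟫ = 0 := by
    rw [Quaternion.inner_def]
    simp [Quaternion.re_mul, hpure]
    linarith [hdot]
  have i1qb : ⟪(1:ℍ), q*b⟫ = 0 := by
    rw [Quaternion.inner_def, one_mul, Quaternion.re_star]
    simp [Quaternion.re_mul, hpure]
    linarith [hdot]
  have iqqb : ⟪q, q*b⟫ = 0 := by
    rw [Quaternion.inner_def, star_mul, qre_mul_comm, mul_assoc,
      Quaternion.star_mul_self, hqcoe, mul_one, Quaternion.re_star, hbre]
  have hle : Submodule.span ℝ {b, q*b} ≤ (Submodule.span ℝ {(1:ℍ), q})ᗮ := by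
    rw [Submodule.span_le]
    rintro z hz
    simp only [Set.mem_insert_iff, Set.mem_singleton_iff] at hz
    rcases hz with rfl | rfl
    · exact qmem_orth q z i1b iqb
    · exact qmem_orth q _ i1qb iqqb
  have i1q : ⟪(1:ℍ), q⟫ = 0 := by
    rw [Quaternion.inner_def, one_mul, Quaternion.re_star, hpure]
  have ibqb : ⟪b, q*b⟫ = 0 := by
    rw [Quaternion.inner_def, star_mul, ← mul_assoc, hbb, one_mul,
      Quaternion.re_star, hpure]
  have hnormqb : ‖q*b‖ = 1 := by rw [norm_mul, hunit, hb]; norm_num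
  have frL : Module.finrank ℝ (Submodule.span ℝ {(1:ℍ), q}) = 2 :=
    qfinrank_pair norm_one hunit i1q
  have frP : Module.finrank ℝ (Submodule.span ℝ {b, q*b}) = 2 :=
    qfinrank_pair hb hnormqb ibqb
  have frO : Module.finrank ℝ ((Submodule.span ℝ {(1:ℍ), q})ᗮ) = 2 := by
    have h := Submodule.finrank_add_finrank_orthogonal (Submodule.span ℝ {(1:ℍ), q})
    rw [frL, Quaternion.finrank_eq_four] at h
    omega
  exact Submodule.eq_of_le_of_finrank_le hle (by rw [frO, frP])

end Helpers

/-- If `q` is a pure unit quaternion, `L = spanℝ{1, q}`, and `a`, `b` are unit quaternions with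
`a·L = L·b`, then either `a·L = L` or `a·L = Lᗮ`. -/
theorem left_translate_eq_right_translate (q : Quaternion ℝ)
    (hpure : q.re = 0) (hunit : ‖q‖ = 1) (a b : Quaternion ℝ)
    (ha : ‖a‖ = 1) (hb : ‖b‖ = 1)
    (hab : (Submodule.span ℝ {(1 : Quaternion ℝ), q}).map (LinearMap.mulLeft ℝ a) =
        (Submodule.span ℝ {(1 : Quaternion ℝ), q}).map (LinearMap.mulRight ℝ b)) :
    (Submodule.span ℝ {(1 : Quaternion ℝ), q}).map (LinearMap.mulLeft ℝ a) =
        Submodule.span ℝ {(1 : Quaternion ℝ), q} ∨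
    (Submodule.span ℝ {(1 : Quaternion ℝ), q}).map (LinearMap.mulLeft ℝ a) =
        (Submodule.span ℝ {(1 : Quaternion ℝ), q})ᗮ := by
  have hq2 : q * q = -1 := qpure_sq hpure hunit
  have hbb : b * star b = 1 := qself_mul_star_one hb
  have hbb' : star b * b = 1 := qstar_mul_self_one hb
  rw [qmap_left] at hab ⊢
  rw [qmap_right] at hab
  -- step 1 : a = l * b with l = s•1 + t•q
  have hamem : a ∈ Submodule.span ℝ {b, q*b} := by
    rw [← hab]; exact Submodule.subset_span (by simp)
  obtain ⟨s, t, hst⟩ := Submodule.mem_span_pair.1 hamem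
  obtain ⟨l, hl⟩ : ∃ l : ℍ, l = (s:ℝ)•(1:ℍ) + t•q := ⟨_, rfl⟩
  have hal : a = l * b := by
    rw [hl, add_mul, smul_mul_assoc, smul_mul_assoc, one_mul, hst]
  -- step 2 : a*q = m * b
  have haqmem : a*q ∈ Submodule.span ℝ {b, q*b} := by
    rw [← hab]; exact Submodule.subset_span (by simp)
  obtain ⟨u, v, huv⟩ := Submodule.mem_span_pair.1 haqmem
  obtain ⟨m, hm⟩ : ∃ m : ℍ, m = (u:ℝ)•(1:ℍ) + v•q := ⟨_, rfl⟩
  have haqm : a*q = m * b := by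
    rw [hm, add_mul, smul_mul_assoc, smul_mul_assoc, one_mul, huv]
  -- norm of l
  have hlnorm : ‖l‖ = 1 := by
    have : ‖a‖ = ‖l‖ * ‖b‖ := by rw [hal, norm_mul]
    rw [ha, hb, mul_one] at this; exact this.symm
  have hll : star l * l = 1 := qstar_mul_self_one hlnorm
  -- n := star l * m,  b*q = n*b
  obtain ⟨n, hn⟩ : ∃ n : ℍ, n = star l * m := ⟨_, rfl⟩
  have hbqn : b * q = n * b := by
    have h1 : l * (b * q) = m * b := by rw [← mul_assoc, ← hal, haqm]
    calc b * q = (star l * l) * (b * q) := by rw [hll, one_mul]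
    _ = star l * (l * (b*q)) := by rw [mul_assoc]
    _ = star l * (m * b) := by rw [h1]
    _ = n * b := by rw [hn, mul_assoc]
  -- n in coordinates: w•1 + x•q
  obtain ⟨w, hw⟩ : ∃ w : ℝ, w = s*u + t*v := ⟨_, rfl⟩
  obtain ⟨x, hx⟩ : ∃ x : ℝ, x = s*v - t*u := ⟨_, rfl⟩
  have hnwx : n = w•(1:ℍ) + x•q := by
    rw [hn, hl, hm, qstar_pair hpure, qmul_pair hq2, hw, hx]
    module
  -- n = b*q*star b
  have hnb : n = b * q * star b := by
    calc n = n * (b * star b) := by rw [hbb, mul_one]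
    _ = (n * b) * star b := (mul_assoc n b (star b)).symm
    _ = b * q * star b := by rw [← hbqn]
  have hnre : n.re = 0 := by
    rw [hnb, qre_mul_comm (b*q) (star b), ← mul_assoc, hbb', one_mul, hpure]
  have hw0 : w = 0 := by
    have h := congrArg QuaternionAlgebra.re hnwx
    simp [hnre, hpure] at h
    linarith
  have hnxq : n = x • q := by rw [hnwx, hw0]; module
  have hqn1 : normSq q = 1 := by
    rw [Quaternion.normSq_eq_norm_mul_self, hunit]; norm_num
  have hnn : ‖n‖ = 1 := by
    rw [hnb, norm_mul, norm_mul, Quaternion.norm_star, hb, hunit]; norm_num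
  have hx2 : x * x = 1 := by
    have h := Quaternion.normSq_eq_norm_mul_self n
    rw [hnn, hnxq, Quaternion.normSq_smul, hqn1] at h
    linear_combination h
  rcases mul_self_eq_one_iff.1 hx2 with hx1 | hx1
  · -- commuting case : a·L = L
    left
    have hcomm : b * q = q * b := by
      rw [hbqn, hnxq, hx1, one_smul]
    rw [hab]
    exact qspan_comm_case hpure hunit hb hcomm
  · -- anticommuting case : a·L = Lᗮ
    right
    have hanti : b * q = -(q * b) := by
      rw [hbqn, hnxq, hx1]
      simp [neg_smul, one_smul]
    rw [hab]
    exact qspan_anti_case hpure hunit hb hanti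
end

section
/- Let q be a pure unit quaternion, L = spanℝ{1, q}, and a, b unit quaternions with M := a·L = L·b. The pairs (a, aq) and (b, qb) are both orthonormal bases of M; if the 2×2 change-of-basis matrix from (a, aq) to (b, qb) has positive determinant (i.e. they induce the same orientation of M), then M = L and a·q = q·a. -/
open Quaternion

set_option maxHeartbeats 1000000

private lemma re_mul_comm (x y : Quaternion ℝ) : (x * y).re = (y * x).re := by
  simp only [Quaternion.re_mul]; ring

private lemma span_mul_mem {q u v : Quaternion ℝ} (hqq : q * q = -1)
    (hu : u ∈ Submodule.span ℝ {(1 : Quaternion ℝ), q})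
    (hv : v ∈ Submodule.span ℝ {(1 : Quaternion ℝ), q}) :
    u * v ∈ Submodule.span ℝ {(1 : Quaternion ℝ), q} := by
  rw [Submodule.mem_span_pair] at hu hv ⊢
  obtain ⟨α, β, rfl⟩ := hu
  obtain ⟨γ, δ, rfl⟩ := hv
  refine ⟨α * γ - β * δ, α * δ + β * γ, ?_⟩
  simp only [add_mul, mul_add, smul_mul_assoc, mul_smul_comm, one_mul, mul_one,
    hqq, smul_neg, smul_smul, sub_smul, add_smul]
  module

/-- Let `q` be a pure unit quaternion, `L = spanℝ{1,q}`, `a, b` unit quaternions with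
`M := a·L = L·b`. Then `(a, aq)` and `(b, qb)` are orthonormal (bases of `M`), and if the
change-of-basis matrix from `(a, aq)` to `(b, qb)` has positive determinant, then `M = L`
and `aq = qa`. -/
theorem same_orientation_implies_eq (q : Quaternion ℝ)
    (hpure : q.re = 0) (hunit : ‖q‖ = 1) (a b : Quaternion ℝ)
    (ha : ‖a‖ = 1) (hb : ‖b‖ = 1)
    (hM : (Submodule.span ℝ {(1 : Quaternion ℝ), q}).map (LinearMap.mulLeft ℝ a) =
        (Submodule.span ℝ {(1 : Quaternion ℝ), q}).map (LinearMap.mulRight ℝ b)) :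
    Orthonormal ℝ ![a, a * q] ∧ Orthonormal ℝ ![b, q * b] ∧
    (∀ c₁₁ c₁₂ c₂₁ c₂₂ : ℝ,
      b = c₁₁ • a + c₂₁ • (a * q) →
      q * b = c₁₂ • a + c₂₂ • (a * q) →
      0 < c₁₁ * c₂₂ - c₁₂ * c₂₁ →
      (Submodule.span ℝ {(1 : Quaternion ℝ), q}).map (LinearMap.mulLeft ℝ a) =
          Submodule.span ℝ {(1 : Quaternion ℝ), q} ∧ a * q = q * a) := by
  have hnq : normSq q = 1 := by rw [Quaternion.normSq_eq_norm_mul_self, hunit]; norm_num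
  have hna : normSq a = 1 := by rw [Quaternion.normSq_eq_norm_mul_self, ha]; norm_num
  have hnb : normSq b = 1 := by rw [Quaternion.normSq_eq_norm_mul_self, hb]; norm_num
  have hsq : star q = -q := Quaternion.star_eq_neg.mpr hpure
  have hqq : q * q = -1 := by
    have h := Quaternion.star_mul_self q
    rw [hsq, hnq, Quaternion.coe_one, neg_mul] at h
    rw [← neg_neg (q * q), h]
  have hss : a * star a = 1 := by rw [Quaternion.self_mul_star, hna, Quaternion.coe_one]
  have hss' : star a * a = 1 := by rw [Quaternion.star_mul_self, hna, Quaternion.coe_one]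
  have hbb : b * star b = 1 := by rw [Quaternion.self_mul_star, hnb, Quaternion.coe_one]
  have ha0 : a ≠ 0 := by intro h; rw [h, norm_zero] at ha; norm_num at ha
  have hb0 : b ≠ 0 := by intro h; rw [h, norm_zero] at hb; norm_num at hb
  -- orthonormality of (a, aq)
  have o1 : Orthonormal ℝ ![a, a * q] := by
    rw [orthonormal_iff_ite]
    intro i j
    fin_cases i <;> fin_cases j <;>
      simp only [Matrix.cons_val_zero, Matrix.cons_val_one, Matrix.head_cons, if_true, if_false,
        Fin.mk_zero, Fin.mk_one, ne_eq, zero_ne_one, one_ne_zero, Fin.isValue, reduceIte]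
    · rw [Quaternion.inner_self, hna]
    · rw [Quaternion.inner_def, re_mul_comm, star_mul, mul_assoc, hss', mul_one,
        Quaternion.re_star, hpure]
    · rw [Quaternion.inner_def, re_mul_comm, ← mul_assoc, hss', one_mul, hpure]
    · rw [Quaternion.inner_self, map_mul, hna, hnq, mul_one]
  have o2 : Orthonormal ℝ ![b, q * b] := by
    rw [orthonormal_iff_ite]
    intro i j
    fin_cases i <;> fin_cases j <;>
      simp only [Matrix.cons_val_zero, Matrix.cons_val_one, Matrix.head_cons, if_true, if_false,
        Fin.mk_zero, Fin.mk_one, ne_eq, zero_ne_one, one_ne_zero, Fin.isValue, reduceIte]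
    · rw [Quaternion.inner_self, hnb]
    · rw [Quaternion.inner_def, star_mul, ← mul_assoc, hbb, one_mul, hsq, Quaternion.re_neg,
        hpure, neg_zero]
    · rw [Quaternion.inner_def, mul_assoc, hbb, mul_one, hpure]
    · rw [Quaternion.inner_self, map_mul, hnb, hnq, mul_one]
  refine ⟨o1, o2, ?_⟩
  intro c₁₁ c₁₂ c₂₁ c₂₂ h1 h2 hdet
  -- rewrite as b = a * z₁, q * b = a * z₂
  set z₁ : Quaternion ℝ := c₁₁ • (1 : Quaternion ℝ) + c₂₁ • q with hz₁
  set z₂ : Quaternion ℝ := c₁₂ • (1 : Quaternion ℝ) + c₂₂ • q with hz₂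
  have hb1 : b = a * z₁ := by
    rw [h1, hz₁, mul_add, mul_smul_comm, mul_smul_comm, mul_one]
  have hb2 : q * b = a * z₂ := by
    rw [h2, hz₂, mul_add, mul_smul_comm, mul_smul_comm, mul_one]
  -- w = star a * q * a
  set w : Quaternion ℝ := star a * q * a with hw
  have hwz : w * z₁ = z₂ := by
    have h2 : star a * (q * (a * z₁)) = star a * (a * z₂) := by rw [← hb1, hb2]
    rw [hw, mul_assoc, mul_assoc, h2, ← mul_assoc, hss', one_mul]
  have hwre : w.re = 0 := by
    have hstw : star w = -w := by
      rw [hw, star_mul, star_mul, star_star, hsq, neg_mul, mul_neg, ← mul_assoc]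
    rw [← Quaternion.star_eq_neg, hstw]
  have hnw : normSq w = 1 := by rw [hw, map_mul, map_mul, normSq_star, hna, hnq]; ring
  have hz₁0 : z₁ ≠ 0 := by
    intro h
    rw [h, mul_zero] at hb1
    exact hb0 hb1
  have hN : 0 < normSq z₁ := lt_of_le_of_ne (normSq_nonneg) (Ne.symm (normSq_ne_zero.mpr hz₁0))
  -- key product computation
  have hzz : z₂ * star z₁ =
      (c₁₂ * c₁₁ + c₂₂ * c₂₁) • (1 : Quaternion ℝ) + (c₁₁ * c₂₂ - c₁₂ * c₂₁) • q := by
    rw [hz₁, hz₂, star_add, Quaternion.star_smul, Quaternion.star_smul, star_one, hsq]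
    simp only [add_mul, mul_add, smul_mul_assoc, mul_smul_comm, one_mul, mul_one,
      hqq, smul_neg, smul_smul, sub_smul, add_smul, mul_neg, neg_smul]
    module
  have hkey : normSq z₁ • w = (c₁₂ * c₁₁ + c₂₂ * c₂₁) • (1 : Quaternion ℝ) +
      (c₁₁ * c₂₂ - c₁₂ * c₂₁) • q := by
    have : w * (z₁ * star z₁) = z₂ * star z₁ := by rw [← mul_assoc, hwz]
    rw [Quaternion.self_mul_star, Quaternion.mul_coe_eq_smul] at this
    rw [this, hzz]
  -- the re part forces r = 0
  have hr : c₁₂ * c₁₁ + c₂₂ * c₂₁ = 0 := by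
    have := congrArg QuaternionAlgebra.re hkey
    simp only [Quaternion.re_smul, Quaternion.re_add, Quaternion.re_one, hpure, hwre,
      smul_eq_mul, mul_zero, mul_one] at this
    linarith
  have hkey2 : normSq z₁ • w = (c₁₁ * c₂₂ - c₁₂ * c₂₁) • q := by
    rw [hkey, hr, zero_smul, zero_add]
  -- compare norms to get normSq z₁ = det
  have hNd : normSq z₁ = c₁₁ * c₂₂ - c₁₂ * c₂₁ := by
    have h := congrArg normSq hkey2
    rw [normSq_smul, normSq_smul, hnw, hnq, mul_one, mul_one] at h
    nlinarith
  have hwq : w = q := by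
    have : normSq z₁ • w = normSq z₁ • q := by rw [hkey2, hNd]
    exact smul_right_injective _ (ne_of_gt hN) this
  have hcomm : a * q = q * a := by
    have h : a * w = a * q := by rw [hwq]
    rw [hw, ← mul_assoc, ← mul_assoc, hss, one_mul] at h
    exact h.symm
  have hq' : q.imI ^ 2 + q.imJ ^ 2 + q.imK ^ 2 = 1 := by
    have h := Quaternion.normSq_def' q
    rw [hnq, hpure] at h
    nlinarith [h]
  have e1 := congrArg QuaternionAlgebra.imI hcomm
  have e2 := congrArg QuaternionAlgebra.imJ hcomm
  have e3 := congrArg QuaternionAlgebra.imK hcomm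
  rw [Quaternion.imI_mul, Quaternion.imI_mul, hpure] at e1
  rw [Quaternion.imJ_mul, Quaternion.imJ_mul, hpure] at e2
  rw [Quaternion.imK_mul, Quaternion.imK_mul, hpure] at e3
  set lam : ℝ := a.imI * q.imI + a.imJ * q.imJ + a.imK * q.imK with hlam
  have haL : a ∈ Submodule.span ℝ {(1 : Quaternion ℝ), q} := by
    rw [Submodule.mem_span_pair]
    refine ⟨a.re, lam, ?_⟩
    ext
    · simp [hpure]
    · simp only [Quaternion.imI_add, Quaternion.imI_smul, Quaternion.imI_one, smul_eq_mul,
        mul_zero, zero_add, hlam]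
      linear_combination a.imI * hq' - (q.imJ / 2) * e3 + (q.imK / 2) * e2
    · simp only [Quaternion.imJ_add, Quaternion.imJ_smul, Quaternion.imJ_one, smul_eq_mul,
        mul_zero, zero_add, hlam]
      linear_combination a.imJ * hq' + (q.imI / 2) * e3 - (q.imK / 2) * e1
    · simp only [Quaternion.imK_add, Quaternion.imK_smul, Quaternion.imK_one, smul_eq_mul,
        mul_zero, zero_add, hlam]
      linear_combination a.imK * hq' - (q.imI / 2) * e2 + (q.imJ / 2) * e1
  have hstaraL : star a ∈ Submodule.span ℝ {(1 : Quaternion ℝ), q} := by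
    rw [Submodule.mem_span_pair] at haL ⊢
    obtain ⟨α, β, hab⟩ := haL
    refine ⟨2 * a.re - α, -β, ?_⟩
    have hc : ((2 * a.re : ℝ) : Quaternion ℝ) = (2 * a.re) • (1 : Quaternion ℝ) := by
      rw [← Quaternion.coe_mul_eq_smul, mul_one]
    have h : star a = (2 * a.re) • (1 : Quaternion ℝ) - a := by
      rw [Quaternion.star_eq_two_re_sub, hc]
    rw [h, ← hab]
    module
  refine ⟨le_antisymm ?_ ?_, hcomm⟩
  · rintro x hx
    rw [Submodule.mem_map] at hx
    obtain ⟨y, hy, rfl⟩ := hx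
    rw [LinearMap.mulLeft_apply]
    exact span_mul_mem hqq haL hy
  · intro x hx
    rw [Submodule.mem_map]
    refine ⟨star a * x, span_mul_mem hqq hstaraL hx, ?_⟩
    rw [LinearMap.mulLeft_apply, ← mul_assoc, hss, one_mul]
end

section
/- Identify ℝ⁴ with ℂ² and fix λ = p + qi ∈ ℂ with μ := |λ| > 0. Consider the complex line W_λ = {(x + yi, λ(x + yi)) : x, y ∈ ℝ} = {(x, y, px − qy, qx + py) : x, y ∈ ℝ} ⊆ ℝ⁴, and let ℓ_λ ⊆ ℝ³ be its image in the affine chart dividing by the third coordinate (on vectors with px − qy ≠ 0). Then the minimum distance from points of ℓ_λ to the z-axis is 1/μ, attained at the point (p/μ², −q/μ², 0); in particular the closest point lies in the plane z = 0 for every λ ≠ 0. -/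
/-- The regular (complex) spread is concentric: for `λ = p + qi ≠ 0` in ℂ, the affine chart
image of the complex line `{(x, y, px − qy, qx + py)}` (dividing by the third coordinate) has
minimum distance `1/|λ|` to the z-axis, attained at the point `(p/|λ|², −q/|λ|², 0)`, which
lies in the plane `z = 0`. -/
theorem regular_spread_concentric (p q : ℝ) (hpq : p ^ 2 + q ^ 2 ≠ 0) :
    (∀ x y : ℝ, p * x - q * y ≠ 0 →
      1 / Real.sqrt (p ^ 2 + q ^ 2) ≤
        Real.sqrt ((x / (p * x - q * y)) ^ 2 + (y / (p * x - q * y)) ^ 2)) ∧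
    (∃ x y : ℝ, p * x - q * y ≠ 0 ∧
      ((x / (p * x - q * y), y / (p * x - q * y), (q * x + p * y) / (p * x - q * y)) :
          ℝ × ℝ × ℝ) =
        (p / (p ^ 2 + q ^ 2), -q / (p ^ 2 + q ^ 2), 0)) ∧
    (∀ x y : ℝ, p * x - q * y ≠ 0 →
      Real.sqrt ((x / (p * x - q * y)) ^ 2 + (y / (p * x - q * y)) ^ 2) =
          1 / Real.sqrt (p ^ 2 + q ^ 2) →
      (q * x + p * y) / (p * x - q * y) = 0) := by
  have hS : 0 < p ^ 2 + q ^ 2 := lt_of_le_of_ne (by positivity) (Ne.symm hpq)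
  have hsS : 0 < Real.sqrt (p ^ 2 + q ^ 2) := Real.sqrt_pos.mpr hS
  refine ⟨?_, ?_, ?_⟩
  · intro x y hd
    have hd2 : 0 < (p * x - q * y) ^ 2 := by positivity
    have h1 : 1 / Real.sqrt (p ^ 2 + q ^ 2) = Real.sqrt (1 / (p ^ 2 + q ^ 2)) := by
      rw [one_div, one_div, Real.sqrt_inv]
    rw [h1]
    apply Real.sqrt_le_sqrt
    rw [div_pow, div_pow, ← add_div, div_le_div_iff₀ hS hd2]
    nlinarith [sq_nonneg (q * x + p * y)]
  · have hne : p * p - q * -q ≠ 0 := by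
      have : p * p - q * -q = p ^ 2 + q ^ 2 := by ring
      rw [this]; exact hpq
    refine ⟨p, -q, hne, ?_⟩
    have h3 : p * p - q * -q = p ^ 2 + q ^ 2 := by ring
    rw [h3, Prod.mk.injEq, Prod.mk.injEq]
    refine ⟨rfl, by ring, ?_⟩
    rw [show q * p + p * -q = (0:ℝ) from by ring]
    exact zero_div _
  · intro x y hd heq
    have hd2 : 0 < (p * x - q * y) ^ 2 := by positivity
    have h0 : (0:ℝ) ≤ (x / (p * x - q * y)) ^ 2 + (y / (p * x - q * y)) ^ 2 := by positivity
    have hA : (x / (p * x - q * y)) ^ 2 + (y / (p * x - q * y)) ^ 2 = 1 / (p ^ 2 + q ^ 2) := by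
      have h2 := (Real.sq_sqrt h0).symm
      rw [heq] at h2
      have e : (1 / Real.sqrt (p ^ 2 + q ^ 2)) ^ 2 = 1 / (p ^ 2 + q ^ 2) := by
        rw [div_pow, one_pow, Real.sq_sqrt hS.le]
      exact h2.trans e
    rw [div_pow, div_pow, ← add_div, div_eq_div_iff hd2.ne' hS.ne'] at hA
    have hz : q * x + p * y = 0 := by nlinarith [sq_nonneg (q * x + p * y)]
    rw [hz, zero_div]
end
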